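/- If D is a bipartite digraph, then ndi(D) ≤ Δ*(D) + 2. -/

import Mathlib

set_option linter.unusedSectionVars false
set_option linter.unusedVariables false
set_option maxHeartbeats 1000000


open Finset

section Defs

variable {V : Type*}

/-- A (proper) arc-colouring: arcs sharing a tail, or sharing a head, get distinct colours. -/
def ProperArc (A : V → V → Prop) (γ : V → V → ℕ) : Prop :=
  (∀ u v w, A u v → A u w → v ≠ w → γ u v ≠ γ u w) ∧
  (∀ u v w, A u v → A w v → u ≠ w → γ u v ≠ γ w v)

/-- Colours appearing on outgoing arcs of `u`. -/
def outColors (A : V → V → Prop) (γ : V → V → ℕ) (u : V) : Set ℕ :=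
  {c | ∃ v, A u v ∧ γ u v = c}

/-- Colours appearing on incoming arcs of `u`. -/
def inColors (A : V → V → Prop) (γ : V → V → ℕ) (u : V) : Set ℕ :=
  {c | ∃ v, A v u ∧ γ v u = c}

/-- `u` and `v` are distinguished by `γ`. -/
def Distinguished (A : V → V → Prop) (γ : V → V → ℕ) (u v : V) : Prop :=
  (outColors A γ u, inColors A γ u) ≠ (outColors A γ v, inColors A γ v)

/-- Neighbour-distinguishing arc-colouring. -/
def NDArc (A : V → V → Prop) (γ : V → V → ℕ) : Prop :=
  ∀ u v, A u v → Distinguished A γ u v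

/-- `D` has a neighbour-distinguishing proper arc-colouring with `k` colours. -/
def HasNDColoring (A : V → V → Prop) (k : ℕ) : Prop :=
  ∃ γ : V → V → ℕ, (∀ u v, A u v → γ u v < k) ∧ ProperArc A γ ∧ NDArc A γ

/-- `D` has a proper arc-colouring with `k` colours. -/
def HasProperColoring (A : V → V → Prop) (k : ℕ) : Prop :=
  ∃ γ : V → V → ℕ, (∀ u v, A u v → γ u v < k) ∧ ProperArc A γ

/-- Outdegree of `u`. -/
def outDeg [Fintype V] (A : V → V → Prop) [DecidableRel A] (u : V) : ℕ :=
  (Finset.univ.filter fun v => A u v).card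

/-- Indegree of `u`. -/
def inDeg [Fintype V] (A : V → V → Prop) [DecidableRel A] (u : V) : ℕ :=
  (Finset.univ.filter fun v => A v u).card

/-- Δ*(D) = max{Δ⁺(D), Δ⁻(D)}. -/
def maxDeg [Fintype V] (A : V → V → Prop) [DecidableRel A] : ℕ :=
  max (Finset.univ.sup (outDeg A)) (Finset.univ.sup (inDeg A))

end Defs

section Konig
variable {V : Type*} [Fintype V] [DecidableEq V]

/-- properness of a colouring of a set of arcs -/
def PProper (E : Finset (V × V)) (c : V × V → ℕ) : Prop :=
  ∀ e ∈ E, ∀ f ∈ E, e ≠ f → (e.1 = f.1 ∨ e.2 = f.2) → c e ≠ c f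

lemma exists_missing (t : Finset ℕ) (k : ℕ) (h : t.card < k) : ∃ a, a < k ∧ a ∉ t := by
  by_contra h'
  push_neg at h'
  have hsub : Finset.range k ⊆ t := fun a ha => h' a (Finset.mem_range.mp ha)
  have := Finset.card_le_card hsub
  simp only [Finset.card_range] at this
  omega

/-- the graph of arcs coloured a or b -/
def swapGraph (E' : Finset (V × V)) (c : V × V → ℕ) (a b : ℕ) : SimpleGraph V where
  Adj u v := u ≠ v ∧ ∃ p, p ∈ E' ∧ (p = (u, v) ∨ p = (v, u)) ∧ (c p = a ∨ c p = b)
  symm := by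
    constructor
    rintro u v ⟨hne, p, hp, hor, hc⟩
    exact ⟨hne.symm, p, hp, hor.symm, hc⟩
  loopless := by constructor; rintro u ⟨hne, -⟩; exact hne rfl

lemma swap_walk {E' : Finset (V × V)} {c : V × V → ℕ} {a b : ℕ} {s : V → Bool}
    (hE : ∀ e ∈ E', s e.1 = false ∧ s e.2 = true) (hp : PProper E' c) :
    ∀ {y z v : V} (q : (swapGraph E' c a b).Walk z y) (h : (swapGraph E' c a b).Adj v z),
      s y = true → (∀ e ∈ E', e.2 = y → c e ≠ b) →
      (SimpleGraph.Walk.cons h q).IsPath →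
      (if s v = false then (v, z) ∈ E' ∧ c (v, z) = a else (z, v) ∈ E' ∧ c (z, v) = b) := by
  intro y z v q
  induction q generalizing v with
  | nil =>
    intro h hsy hby _
    obtain ⟨hne, p, hpE, hor, hc⟩ := h
    rcases hor with h1 | h2
    · subst h1
      have hs := hE _ hpE
      have hsv : s v = false := hs.1
      simp only [hsv, if_pos rfl]
      refine ⟨hpE, ?_⟩
      rcases hc with hc | hc
      · exact hc
      · exact absurd hc (hby _ hpE rfl)
    · subst h2
      have hs := hE _ hpE
      rw [hsy] at hs
      exact absurd hs.1 (by simp)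
  | @cons z z₂ w h₂ q' ih =>
    intro h hsy hby hpath
    obtain ⟨hne, p, hpE, hor, hc⟩ := h
    have hpath' : (SimpleGraph.Walk.cons h₂ q').IsPath := hpath.of_cons
    have hvz₂ : v ≠ z₂ := by
      intro hvz
      have : v ∈ (SimpleGraph.Walk.cons h₂ q').support := by
        rw [hvz]
        simp [SimpleGraph.Walk.support_cons]
      exact (SimpleGraph.Walk.cons_isPath_iff _ _ |>.mp hpath).2 this
    have ihz := ih (v := z) h₂ hsy hby hpath'
    rcases hor with h1 | h2
    · -- p = (v, z) : s v = false, s z = true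
      subst h1
      have hs := hE _ hpE
      have hsv : s v = false := hs.1
      have hsz : s z = true := hs.2
      simp only [hsv, if_pos rfl]
      refine ⟨hpE, ?_⟩
      rw [hsz, if_neg (by simp)] at ihz
      obtain ⟨hz₂E, hz₂c⟩ := ihz
      have hneq : (v, z) ≠ (z₂, z) := by simp [hvz₂]
      have := hp _ hpE _ hz₂E hneq (Or.inr rfl)
      rw [hz₂c] at this
      rcases hc with hc | hc
      · exact hc
      · exact absurd hc this
    · -- p = (z, v) : s z = false, s v = true
      subst h2
      have hs := hE _ hpE
      have hsz : s z = false := hs.1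
      have hsv : s v = true := hs.2
      rw [hsv, if_neg (by simp)]
      refine ⟨hpE, ?_⟩
      rw [hsz] at ihz
      simp only [if_pos rfl] at ihz
      obtain ⟨hz₂E, hz₂c⟩ := ihz
      have hneq : (z, v) ≠ (z, z₂) := by simp [hvz₂]
      have := hp _ hpE _ hz₂E hneq (Or.inl rfl)
      rw [hz₂c] at this
      rcases hc with hc | hc
      · exact absurd hc this
      · exact hc

lemma not_reach {E' : Finset (V × V)} {c : V × V → ℕ} {a b : ℕ} {s : V → Bool}
    (hE : ∀ e ∈ E', s e.1 = false ∧ s e.2 = true) (hp : PProper E' c)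
    {x y : V} (hsx : s x = false) (hsy : s y = true)
    (hax : ∀ e ∈ E', e.1 = x → c e ≠ a) (hby : ∀ e ∈ E', e.2 = y → c e ≠ b) :
    ¬ (swapGraph E' c a b).Reachable y x := by
  intro hr
  obtain ⟨w⟩ := hr.symm
  have hxy : x ≠ y := by intro h; rw [h, hsy] at hsx; exact absurd hsx (by simp)
  obtain ⟨w', hw'⟩ := w.toPath
  cases w' with
  | nil => exact hxy rfl
  | cons h q =>
    have := swap_walk hE hp q h hsy hby hw'
    rw [hsx] at this
    simp only [if_pos rfl] at this
    exact hax _ this.1 rfl this.2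

lemma swap_step {E' : Finset (V × V)} {c : V × V → ℕ} {s : V → Bool}
    (hE : ∀ e ∈ E', s e.1 = false ∧ s e.2 = true) (hp : PProper E' c)
    {x y : V} (hsx : s x = false) (hsy : s y = true) {a b : ℕ} (hab : a ≠ b)
    (hax : ∀ e ∈ E', e.1 = x → c e ≠ a) (hby : ∀ e ∈ E', e.2 = y → c e ≠ b) :
    ∃ c' : V × V → ℕ, (∀ e ∈ E', c' e = c e ∨ c' e = a ∨ c' e = b) ∧ PProper E' c' ∧
      (∀ e ∈ E', e.1 = x → c' e ≠ a) ∧ (∀ e ∈ E', e.2 = y → c' e ≠ a) := by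
  classical
  set G := swapGraph E' c a b with hG
  set sw : ℕ → ℕ := fun t => if t = a then b else if t = b then a else t with hsw
  have hswa : sw a = b := by simp [hsw]
  have hswb : sw b = a := by simp [hsw, hab.symm]
  have hswinj : ∀ t t', sw t = sw t' → t = t' := by
    intro t t' h
    simp only [hsw] at h
    split_ifs at h <;> simp_all
  -- adjacency from an edge
  have hadj : ∀ e ∈ E', (c e = a ∨ c e = b) → G.Adj e.1 e.2 := by
    intro e he hc
    refine ⟨?_, e, he, Or.inl (Prod.ext rfl rfl).symm, hc⟩
    intro h
    have := hE e he
    rw [h] at this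
    rw [this.2] at this
    simp at this
  set c₂ : V × V → ℕ :=
    fun e => if e ∈ E' ∧ G.Reachable y e.2 ∧ (c e = a ∨ c e = b) then sw (c e) else c e with hc₂
  have hc₂e : ∀ e, c₂ e = if e ∈ E' ∧ G.Reachable y e.2 ∧ (c e = a ∨ c e = b)
      then sw (c e) else c e := fun e => rfl
  refine ⟨c₂, ?_, ?_, ?_, ?_⟩
  · intro e he
    rw [hc₂e e]
    by_cases h : e ∈ E' ∧ G.Reachable y e.2 ∧ (c e = a ∨ c e = b)
    · rw [if_pos h]
      rcases h.2.2 with hc | hc <;> rw [hc] <;> simp [hswa, hswb]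
    · rw [if_neg h]; exact Or.inl rfl
  · -- properness
    intro e he f hf hne hshare
    rw [hc₂e e, hc₂e f]
    by_cases he' : G.Reachable y e.2 ∧ (c e = a ∨ c e = b) <;>
      by_cases hf' : G.Reachable y f.2 ∧ (c f = a ∨ c f = b)
    · rw [if_pos ⟨he, he'⟩, if_pos ⟨hf, hf'⟩]
      intro h
      exact hp e he f hf hne hshare (hswinj _ _ h)
    · rw [if_pos ⟨he, he'⟩, if_neg (by tauto)]
      -- c' e = sw (c e) ∈ {a, b}
      intro h
      have hcf : c f = a ∨ c f = b := by
        rcases he'.2 with hc | hc <;> rw [hc] at h <;>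
          [ (rw [hswa] at h); (rw [hswb] at h) ] <;> tauto
      -- then f.2 reachable, contradiction
      apply hf'
      refine ⟨?_, hcf⟩
      have hre : G.Reachable y e.2 := he'.1
      have hae : G.Adj e.1 e.2 := hadj e he he'.2
      have haf : G.Adj f.1 f.2 := hadj f hf hcf
      rcases hshare with h1 | h2
      · have hy1 : G.Reachable y e.1 := hre.trans hae.symm.reachable
        rw [h1] at hy1
        exact hy1.trans haf.reachable
      · exact h2 ▸ hre
    · rw [if_neg (by tauto), if_pos ⟨hf, hf'⟩]
      intro h
      have hce : c e = a ∨ c e = b := by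
        rcases hf'.2 with hc | hc <;> rw [hc] at h <;>
          [ (rw [hswa] at h); (rw [hswb] at h) ] <;> tauto
      apply he'
      refine ⟨?_, hce⟩
      have hrf : G.Reachable y f.2 := hf'.1
      have hae : G.Adj e.1 e.2 := hadj e he hce
      have haf : G.Adj f.1 f.2 := hadj f hf hf'.2
      rcases hshare with h1 | h2
      · have hy1 : G.Reachable y f.1 := hrf.trans haf.symm.reachable
        rw [← h1] at hy1
        exact hy1.trans hae.reachable
      · exact h2 ▸ hrf
    · rw [if_neg (by tauto), if_neg (by tauto)]
      exact hp e he f hf hne hshare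
  · -- tail x avoids a
    intro e he hex
    rw [hc₂e e]
    have hnr : ¬ G.Reachable y x := not_reach hE hp hsx hsy hax hby
    by_cases hc : c e = b
    · have : ¬ (e ∈ E' ∧ G.Reachable y e.2 ∧ (c e = a ∨ c e = b)) := by
        rintro ⟨-, hr, -⟩
        have hae : G.Adj e.1 e.2 := hadj e he (Or.inr hc)
        exact hnr (hr.trans (hex ▸ hae.symm.reachable))
      rw [if_neg this, hc]
      exact fun h => hab h.symm
    · by_cases hcond : e ∈ E' ∧ G.Reachable y e.2 ∧ (c e = a ∨ c e = b)
      · rcases hcond.2.2 with h1 | h1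
        · exact absurd h1 (hax e he hex)
        · exact absurd h1 hc
      · rw [if_neg hcond]
        exact hax e he hex
  · -- head y avoids a
    intro e he hey
    rw [hc₂e e]
    by_cases hc : c e = a
    · have : e ∈ E' ∧ G.Reachable y e.2 ∧ (c e = a ∨ c e = b) := by
        refine ⟨he, ?_, Or.inl hc⟩
        rw [hey]
      rw [if_pos this, hc, hswa]
      exact fun h => hab h.symm
    · by_cases hcond : e ∈ E' ∧ G.Reachable y e.2 ∧ (c e = a ∨ c e = b)
      · rw [if_pos hcond]
        rcases hcond.2.2 with h1 | h1
        · exact absurd h1 hc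
        · rw [h1, hswb]
          exact fun h => hby e he hey (h1 ▸ rfl)
      · rw [if_neg hcond]
        exact hc

lemma extend_color {E : Finset (V × V)} {e₀ : V × V} (he₀ : e₀ ∈ E) {c : V × V → ℕ}
    {k a : ℕ} (hlt : ∀ e ∈ E.erase e₀, c e < k) (hak : a < k)
    (hp : PProper (E.erase e₀) c)
    (hax : ∀ e ∈ E.erase e₀, e.1 = e₀.1 → c e ≠ a)
    (hay : ∀ e ∈ E.erase e₀, e.2 = e₀.2 → c e ≠ a) :
    ∃ c' : V × V → ℕ, (∀ e ∈ E, c' e < k) ∧ PProper E c' := by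
  classical
  refine ⟨Function.update c e₀ a, ?_, ?_⟩
  · intro e he
    by_cases h : e = e₀
    · rw [h, Function.update_self]; exact hak
    · rw [Function.update_of_ne h]
      exact hlt e (Finset.mem_erase.mpr ⟨h, he⟩)
  · intro e he f hf hne hshare
    by_cases h1 : e = e₀ <;> by_cases h2 : f = e₀
    · exact absurd (h1.trans h2.symm) hne
    · rw [h1, Function.update_self, Function.update_of_ne h2]
      have hf' : f ∈ E.erase e₀ := Finset.mem_erase.mpr ⟨h2, hf⟩
      rcases hshare with hs | hs
      · exact fun h => (hax f hf' (h1 ▸ hs).symm) h.symm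
      · exact fun h => (hay f hf' (h1 ▸ hs).symm) h.symm
    · rw [h2, Function.update_self, Function.update_of_ne h1]
      have he' : e ∈ E.erase e₀ := Finset.mem_erase.mpr ⟨h1, he⟩
      rcases hshare with hs | hs
      · exact hax e he' (h2 ▸ hs)
      · exact hay e he' (h2 ▸ hs)
    · rw [Function.update_of_ne h1, Function.update_of_ne h2]
      exact hp e (Finset.mem_erase.mpr ⟨h1, he⟩) f (Finset.mem_erase.mpr ⟨h2, hf⟩) hne hshare

lemma konig_aux (s : V → Bool) (k : ℕ) :
    ∀ (n : ℕ) (E : Finset (V × V)), E.card = n →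
      (∀ e ∈ E, s e.1 = false ∧ s e.2 = true) →
      (∀ u, (E.filter (fun e => e.1 = u)).card ≤ k) →
      (∀ v, (E.filter (fun e => e.2 = v)).card ≤ k) →
      ∃ c : V × V → ℕ, (∀ e ∈ E, c e < k) ∧ PProper E c := by
  intro n
  induction n using Nat.strong_induction_on with
  | _ n ih =>
    intro E hcard hE hout hin
    rcases Finset.eq_empty_or_nonempty E with rfl | ⟨e₀, he₀⟩
    · exact ⟨fun _ => 0, by simp, fun e he => absurd he (by simp)⟩
    · classical
      set x := e₀.1 with hx
      set y := e₀.2 with hy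
      have hsx : s x = false := (hE e₀ he₀).1
      have hsy : s y = true := (hE e₀ he₀).2
      set E' := E.erase e₀ with hE'def
      have hsub : E' ⊆ E := Finset.erase_subset _ _
      have hcard' : E'.card = n - 1 := by rw [hE'def, Finset.card_erase_of_mem he₀, hcard]
      have hn : 1 ≤ n := by rw [← hcard]; exact Finset.card_pos.mpr ⟨e₀, he₀⟩
      obtain ⟨c, hclt, hcp⟩ := ih (n - 1) (by omega) E' hcard'
        (fun e he => hE e (hsub he))
        (fun u => le_trans (Finset.card_le_card (Finset.filter_subset_filter _ hsub)) (hout u))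
        (fun v => le_trans (Finset.card_le_card (Finset.filter_subset_filter _ hsub)) (hin v))
      -- the filtered sets at x and y lose e₀
      have hfx : E'.filter (fun e => e.1 = x) = (E.filter (fun e => e.1 = x)).erase e₀ := by
        rw [hE'def, Finset.filter_erase]
      have hfy : E'.filter (fun e => e.2 = y) = (E.filter (fun e => e.2 = y)).erase e₀ := by
        rw [hE'def, Finset.filter_erase]
      have he₀x : e₀ ∈ E.filter (fun e => e.1 = x) := Finset.mem_filter.mpr ⟨he₀, rfl⟩
      have he₀y : e₀ ∈ E.filter (fun e => e.2 = y) := Finset.mem_filter.mpr ⟨he₀, rfl⟩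
      have hk1 : 1 ≤ k := le_trans (Finset.card_pos.mpr ⟨e₀, he₀x⟩) (hout x)
      have hcx : (E'.filter (fun e => e.1 = x)).card < k := by
        rw [hfx, Finset.card_erase_of_mem he₀x]
        have := hout x
        omega
      have hcy : (E'.filter (fun e => e.2 = y)).card < k := by
        rw [hfy, Finset.card_erase_of_mem he₀y]
        have := hin y
        omega
      obtain ⟨a, hak, ha⟩ := exists_missing ((E'.filter (fun e => e.1 = x)).image c) k
        (lt_of_le_of_lt Finset.card_image_le hcx)
      obtain ⟨b, hbk, hb⟩ := exists_missing ((E'.filter (fun e => e.2 = y)).image c) k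
        (lt_of_le_of_lt Finset.card_image_le hcy)
      have hax : ∀ e ∈ E', e.1 = x → c e ≠ a := by
        intro e he hex hc
        exact ha (Finset.mem_image.mpr ⟨e, Finset.mem_filter.mpr ⟨he, hex⟩, hc⟩)
      have hby : ∀ e ∈ E', e.2 = y → c e ≠ b := by
        intro e he hey hc
        exact hb (Finset.mem_image.mpr ⟨e, Finset.mem_filter.mpr ⟨he, hey⟩, hc⟩)
      by_cases hay : ∀ e ∈ E', e.2 = y → c e ≠ a
      · exact extend_color he₀ hclt hak hcp hax hay
      · by_cases hbx : ∀ e ∈ E', e.1 = x → c e ≠ b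
        · exact extend_color he₀ hclt hbk hcp hbx hby
        · push_neg at hbx
          obtain ⟨f, hf, hfx1, hfcb⟩ := hbx
          have hab : a ≠ b := by
            intro h
            exact hax f hf hfx1 (h ▸ hfcb)
          obtain ⟨c₂, h₂val, h₂p, h₂x, h₂y⟩ :=
            swap_step (fun e he => hE e (hsub he)) hcp hsx hsy hab hax hby
          have h₂lt : ∀ e ∈ E', c₂ e < k := by
            intro e he
            rcases h₂val e he with h | h | h <;> rw [h]
            · exact hclt e he
            · exact hak
            · exact hbk
          exact extend_color he₀ h₂lt hak h₂p h₂x h₂y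

lemma konig (s : V → Bool) (k : ℕ) (E : Finset (V × V))
    (hE : ∀ e ∈ E, s e.1 = false ∧ s e.2 = true)
    (hout : ∀ u, (E.filter (fun e => e.1 = u)).card ≤ k)
    (hin : ∀ v, (E.filter (fun e => e.2 = v)).card ≤ k) :
    ∃ c : V × V → ℕ, (∀ e ∈ E, c e < k) ∧ PProper E c :=
  konig_aux s k E.card E rfl hE hout hin

end Konig


/-- If D is bipartite, then ndi(D) ≤ Δ*(D) + 2. -/
theorem stmt12 {V : Type*} [Fintype V] (A : V → V → Prop) [DecidableRel A]
    (hirr : Irreflexive A) (s : V → Bool)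
    (hbip : ∀ u v, A u v → s u ≠ s v) :
    HasNDColoring A (maxDeg A + 2) := by
  classical
  set k := maxDeg A with hk
  have houtk : ∀ u, outDeg A u ≤ k := fun u =>
    le_trans (Finset.le_sup (Finset.mem_univ u)) (le_max_left _ _)
  have hink : ∀ u, inDeg A u ≤ k := fun u =>
    le_trans (Finset.le_sup (Finset.mem_univ u)) (le_max_right _ _)
  have hside : ∀ u v, A u v → s u = false → s v = true := by
    intro u v h hu
    cases hv : s v
    · exact absurd (hu.trans hv.symm) (hbip u v h)
    · rfl
  have hside' : ∀ u v, A u v → s u = true → s v = false := by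
    intro u v h hu
    cases hv : s v
    · rfl
    · exact absurd (hu.trans hv.symm) (hbip u v h)
  have hsame : ∀ u w v, A u v → A w v → s u = s w := by
    intro u w v h1 h2
    have e1 := hbip u v h1
    have e2 := hbip w v h2
    cases hu : s u <;> cases hw : s w <;> cases hv : s v <;> simp_all
  set E1 : Finset (V × V) := Finset.univ.filter (fun p => A p.1 p.2 ∧ s p.1 = false) with hE1
  set E2 : Finset (V × V) := Finset.univ.filter (fun p => A p.1 p.2 ∧ s p.1 = true) with hE2
  have hmem1 : ∀ p : V × V, p ∈ E1 ↔ A p.1 p.2 ∧ s p.1 = false := by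
    intro p; rw [hE1]; simp
  have hmem2 : ∀ p : V × V, p ∈ E2 ↔ A p.1 p.2 ∧ s p.1 = true := by
    intro p; rw [hE2]; simp
  have hdegtail : ∀ (E : Finset (V × V)), (∀ p ∈ E, A p.1 p.2) → ∀ u,
      (E.filter (fun e => e.1 = u)).card ≤ k := by
    intro E hA u
    refine le_trans (Finset.card_le_card_of_injOn (fun e => e.2) ?_ ?_) (houtk u)
    · intro e he
      rw [Finset.mem_coe, Finset.mem_filter] at he
      rw [Finset.mem_coe, Finset.mem_filter]
      exact ⟨Finset.mem_univ _, he.2 ▸ hA e he.1⟩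
    · intro e he f hf hef
      rw [Finset.mem_coe, Finset.mem_filter] at he hf
      exact Prod.ext (he.2.trans hf.2.symm) hef
  have hdeghead : ∀ (E : Finset (V × V)), (∀ p ∈ E, A p.1 p.2) → ∀ v,
      (E.filter (fun e => e.2 = v)).card ≤ k := by
    intro E hA v
    refine le_trans (Finset.card_le_card_of_injOn (fun e => e.1) ?_ ?_) (hink v)
    · intro e he
      rw [Finset.mem_coe, Finset.mem_filter] at he
      rw [Finset.mem_coe, Finset.mem_filter]
      exact ⟨Finset.mem_univ _, he.2 ▸ hA e he.1⟩
    · intro e he f hf hef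
      rw [Finset.mem_coe, Finset.mem_filter] at he hf
      exact Prod.ext hef (he.2.trans hf.2.symm)
  obtain ⟨c1, h1lt, h1p⟩ := konig s k E1
    (by intro e he; rw [hmem1] at he; exact ⟨he.2, hside _ _ he.1 he.2⟩)
    (hdegtail E1 (fun p hp => ((hmem1 p).mp hp).1))
    (hdeghead E1 (fun p hp => ((hmem1 p).mp hp).1))
  obtain ⟨c2, h2lt, h2p⟩ := konig (fun v => !(s v)) k E2
    (by
      intro e he; rw [hmem2] at he
      constructor
      · show Bool.not (s e.1) = false
        rw [he.2]; rfl
      · show Bool.not (s e.2) = true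
        rw [hside' _ _ he.1 he.2]; rfl)
    (hdegtail E2 (fun p hp => ((hmem2 p).mp hp).1))
    (hdeghead E2 (fun p hp => ((hmem2 p).mp hp).1))
  set γ0 : V → V → ℕ := fun u v => if s u = false then c1 (u, v) else c2 (u, v) + 2 with hγ0
  have hγ0f : ∀ u v, s u = false → γ0 u v = c1 (u, v) := by
    intro u v h; rw [hγ0]; simp [h]
  have hγ0t : ∀ u v, s u = true → γ0 u v = c2 (u, v) + 2 := by
    intro u v h; rw [hγ0]; simp [h]
  have hboundf : ∀ u v, A u v → s u = false → γ0 u v < k := by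
    intro u v h hu
    rw [hγ0f u v hu]
    exact h1lt _ ((hmem1 (u, v)).mpr ⟨h, hu⟩)
  have hboundt : ∀ u v, A u v → s u = true → 2 ≤ γ0 u v ∧ γ0 u v < k + 2 := by
    intro u v h hu
    rw [hγ0t u v hu]
    have := h2lt _ ((hmem2 (u, v)).mpr ⟨h, hu⟩)
    omega
  have houtX : ∀ x, s x = false → ∀ t ∈ outColors A γ0 x, t < k := by
    rintro x hx t ⟨v, hA, rfl⟩
    exact hboundf x v hA hx
  have houtY : ∀ y, s y = true → ∀ t ∈ outColors A γ0 y, 2 ≤ t ∧ t < k + 2 := by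
    rintro y hy t ⟨v, hA, rfl⟩
    exact hboundt y v hA hy
  have hinX : ∀ x, s x = false → ∀ t ∈ inColors A γ0 x, 2 ≤ t ∧ t < k + 2 := by
    rintro x hx t ⟨v, hA, rfl⟩
    refine hboundt v x hA ?_
    cases hv : s v
    · exact absurd (hv.trans hx.symm) (hbip v x hA)
    · rfl
  have hinY : ∀ y, s y = true → ∀ t ∈ inColors A γ0 y, t < k := by
    rintro y hy t ⟨v, hA, rfl⟩
    refine hboundf v y hA ?_
    cases hv : s v
    · rfl
    · exact absurd (hv.trans hy.symm) (hbip v y hA)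
  -- window lemma: bad pairs have all colour sets inside [2, k)
  have hwindow : ∀ p q, A p q → ¬Distinguished A γ0 p q →
      (∀ t ∈ outColors A γ0 p, 2 ≤ t ∧ t < k) ∧ (∀ t ∈ inColors A γ0 p, 2 ≤ t ∧ t < k) ∧
      (∀ t ∈ outColors A γ0 q, 2 ≤ t ∧ t < k) ∧ (∀ t ∈ inColors A γ0 q, 2 ≤ t ∧ t < k) := by
    intro p q hA hnd
    have heq : (outColors A γ0 p, inColors A γ0 p) = (outColors A γ0 q, inColors A γ0 q) :=
      not_not.mp hnd
    have hout : outColors A γ0 p = outColors A γ0 q := congrArg Prod.fst heq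
    have hin : inColors A γ0 p = inColors A γ0 q := congrArg Prod.snd heq
    cases hp : s p
    · have hq : s q = true := hside _ _ hA hp
      refine ⟨?_, ?_, ?_, ?_⟩
      · intro t ht
        exact ⟨(houtY q hq t (hout ▸ ht)).1, houtX p hp t ht⟩
      · intro t ht
        exact ⟨(hinX p hp t ht).1, hinY q hq t (hin ▸ ht)⟩
      · intro t ht
        exact ⟨(houtY q hq t ht).1, houtX p hp t (hout.symm ▸ ht)⟩
      · intro t ht
        exact ⟨(hinX p hp t (hin.symm ▸ ht)).1, hinY q hq t ht⟩
    · have hq : s q = false := hside' _ _ hA hp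
      refine ⟨?_, ?_, ?_, ?_⟩
      · intro t ht
        exact ⟨(houtY p hp t ht).1, houtX q hq t (hout ▸ ht)⟩
      · intro t ht
        exact ⟨(hinX q hq t (hin ▸ ht)).1, hinY p hp t ht⟩
      · intro t ht
        exact ⟨(houtY p hp t (hout.symm ▸ ht)).1, houtX q hq t ht⟩
      · intro t ht
        exact ⟨(hinX q hq t ht).1, hinY p hp t (hin.symm ▸ ht)⟩
  -- the bad arcs, and a maximal strongly-disjoint family of them
  set Bad : Finset (V × V) :=
    Finset.univ.filter (fun p => A p.1 p.2 ∧ ¬Distinguished A γ0 p.1 p.2) with hBad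
  have hmemBad : ∀ p : V × V, p ∈ Bad ↔ A p.1 p.2 ∧ ¬Distinguished A γ0 p.1 p.2 := by
    intro p; rw [hBad]; simp
  set SD : Finset (V × V) → Prop := fun F =>
    ∀ e ∈ F, ∀ f ∈ F, e ≠ f → e.1 ≠ f.1 ∧ e.1 ≠ f.2 ∧ e.2 ≠ f.1 ∧ e.2 ≠ f.2 with hSDdef
  have hne : ((Bad.powerset).filter SD).Nonempty := by
    refine ⟨∅, Finset.mem_filter.mpr ⟨Finset.empty_mem_powerset _, ?_⟩⟩
    intro e he
    exact absurd he (Finset.notMem_empty e)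
  obtain ⟨F, hFmem, hFmax'⟩ := Finset.exists_maximal hne
  replace hFmem : F ∈ (Bad.powerset).filter SD := hFmem
  have hFmax : ∀ x ∈ (Bad.powerset).filter SD, ¬ F < x := fun x hx hlt =>
    lt_irrefl F (lt_of_lt_of_le hlt (hFmax' hx hlt.le))
  rw [Finset.mem_filter, Finset.mem_powerset] at hFmem
  obtain ⟨hFsub, hFSD⟩ := hFmem
  -- the repaired colouring
  set γ : V → V → ℕ :=
    fun u v => if (u, v) ∈ F then (if s u = false then 0 else k + 1) else γ0 u v with hγ
  have hγF : ∀ u v, (u, v) ∈ F → γ u v = if s u = false then 0 else k + 1 := by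
    intro u v h; rw [hγ]; simp [h]
  have hγnF : ∀ u v, (u, v) ∉ F → γ u v = γ0 u v := by
    intro u v h; rw [hγ]; simp [h]
  -- facts about members of F
  have hFbad : ∀ e ∈ F, A e.1 e.2 ∧ ¬Distinguished A γ0 e.1 e.2 :=
    fun e he => (hmemBad e).mp (hFsub he)
  refine ⟨γ, ?_, ⟨?_, ?_⟩, ?_⟩
  · -- colour bound
    intro u v hA
    by_cases h : (u, v) ∈ F
    · rw [hγF u v h]
      split <;> omega
    · rw [hγnF u v h]
      cases hu : s u
      · have := hboundf u v hA hu; omega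
      · exact (hboundt u v hA hu).2
  · -- tail-properness
    intro u v w hAv hAw hvw
    by_cases h1 : (u, v) ∈ F <;> by_cases h2 : (u, w) ∈ F
    · exact absurd rfl ((hFSD _ h1 _ h2 (by simp [hvw])).1)
    · have hbadv := hFbad _ h1
      have hwin := (hwindow u v hbadv.1 hbadv.2).1
      have hmem : γ0 u w ∈ outColors A γ0 u := ⟨w, hAw, rfl⟩
      have := hwin _ hmem
      rw [hγF u v h1, hγnF u w h2]
      split <;> omega
    · have hbadw := hFbad _ h2
      have hwin := (hwindow u w hbadw.1 hbadw.2).1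
      have hmem : γ0 u v ∈ outColors A γ0 u := ⟨v, hAv, rfl⟩
      have := hwin _ hmem
      rw [hγnF u v h1, hγF u w h2]
      split <;> omega
    · rw [hγnF u v h1, hγnF u w h2]
      cases hu : s u
      · rw [hγ0f u v hu, hγ0f u w hu]
        exact h1p _ ((hmem1 (u, v)).mpr ⟨hAv, hu⟩) _ ((hmem1 (u, w)).mpr ⟨hAw, hu⟩)
          (by simp [hvw]) (Or.inl rfl)
      · rw [hγ0t u v hu, hγ0t u w hu]
        have := h2p _ ((hmem2 (u, v)).mpr ⟨hAv, hu⟩) _ ((hmem2 (u, w)).mpr ⟨hAw, hu⟩)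
          (by simp [hvw]) (Or.inl rfl)
        omega
  · -- head-properness
    intro u v w hAu hAw huw
    by_cases h1 : (u, v) ∈ F <;> by_cases h2 : (w, v) ∈ F
    · exact absurd rfl ((hFSD _ h1 _ h2 (by simp [huw])).2.2.2)
    · have hbadv := hFbad _ h1
      have hwin := (hwindow u v hbadv.1 hbadv.2).2.2.2
      have hmem : γ0 w v ∈ inColors A γ0 v := ⟨w, hAw, rfl⟩
      have := hwin _ hmem
      rw [hγF u v h1, hγnF w v h2]
      split <;> omega
    · have hbadw := hFbad _ h2
      have hwin := (hwindow w v hbadw.1 hbadw.2).2.2.2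
      have hmem : γ0 u v ∈ inColors A γ0 v := ⟨u, hAu, rfl⟩
      have := hwin _ hmem
      rw [hγnF u v h1, hγF w v h2]
      split <;> omega
    · rw [hγnF u v h1, hγnF w v h2]
      have hsw : s u = s w := hsame u w v hAu hAw
      cases hu : s u
      · rw [hγ0f u v hu, hγ0f w v (hsw ▸ hu)]
        exact h1p _ ((hmem1 (u, v)).mpr ⟨hAu, hu⟩) _ ((hmem1 (w, v)).mpr ⟨hAw, hsw ▸ hu⟩)
          (by simp [huw]) (Or.inr rfl)
      · rw [hγ0t u v hu, hγ0t w v (hsw ▸ hu)]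
        have := h2p _ ((hmem2 (u, v)).mpr ⟨hAu, hu⟩) _ ((hmem2 (w, v)).mpr ⟨hAw, hsw ▸ hu⟩)
          (by simp [huw]) (Or.inr rfl)
        omega
  · -- neighbour-distinguishing
    intro p q hApq
    have hk1 : 1 ≤ k := by
      have h1 : 0 < outDeg A p :=
        Finset.card_pos.mpr ⟨q, Finset.mem_filter.mpr ⟨Finset.mem_univ q, hApq⟩⟩
      have := houtk p
      omega
    have key : ∀ x y, s x = false → s y = true →
        ((p, q) = (x, y) ∨ (p, q) = (y, x)) →
        (outColors A γ x, inColors A γ x) ≠ (outColors A γ y, inColors A γ y) := by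
      intro x y hsx hsy hxy heqpair
      have hout : outColors A γ x = outColors A γ y := congrArg Prod.fst heqpair
      have hin : inColors A γ x = inColors A γ y := congrArg Prod.snd heqpair
      -- palette bounds under γ
      have hOX : ∀ t ∈ outColors A γ x, t < k := by
        rintro t ⟨w, hA, rfl⟩
        by_cases h : (x, w) ∈ F
        · rw [hγF _ _ h, if_pos hsx]; omega
        · rw [hγnF _ _ h]; exact hboundf x w hA hsx
      have hIX : ∀ t ∈ inColors A γ x, 2 ≤ t := by
        rintro t ⟨w, hA, rfl⟩
        have hsw : s w = true := by
          cases hw : s w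
          · exact absurd (hw.trans hsx.symm) (hbip w x hA)
          · rfl
        by_cases h : (w, x) ∈ F
        · rw [hγF _ _ h, if_neg (by rw [hsw]; simp)]; omega
        · rw [hγnF _ _ h]; exact (hboundt w x hA hsw).1
      have hOY : ∀ t ∈ outColors A γ y, 2 ≤ t := by
        rintro t ⟨w, hA, rfl⟩
        by_cases h : (y, w) ∈ F
        · rw [hγF _ _ h, if_neg (by rw [hsy]; simp)]; omega
        · rw [hγnF _ _ h]; exact (hboundt y w hA hsy).1
      have hIY : ∀ t ∈ inColors A γ y, t < k := by
        rintro t ⟨w, hA, rfl⟩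
        have hsw : s w = false := by
          cases hw : s w
          · rfl
          · exact absurd (hw.trans hsy.symm) (hbip w y hA)
        by_cases h : (w, y) ∈ F
        · rw [hγF _ _ h, if_pos hsw]; omega
        · rw [hγnF _ _ h]; exact hboundf w y hA hsw
      -- the four touched cases
      by_cases hi : ∃ w, (x, w) ∈ F
      · obtain ⟨w, hw⟩ := hi
        have hA : A x w := (hFbad _ hw).1
        have h0 : (0 : ℕ) ∈ outColors A γ x := ⟨w, hA, by rw [hγF _ _ hw, if_pos hsx]⟩
        have := hOY 0 (hout ▸ h0)
        omega
      by_cases hii : ∃ w, (w, y) ∈ F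
      · obtain ⟨w, hw⟩ := hii
        have hA : A w y := (hFbad _ hw).1
        have hsw : s w = false := by
          cases hww : s w
          · rfl
          · exact absurd (hww.trans hsy.symm) (hbip w y hA)
        have h0 : (0 : ℕ) ∈ inColors A γ y := ⟨w, hA, by rw [hγF _ _ hw, if_pos hsw]⟩
        have := hIX 0 (hin ▸ h0)
        omega
      by_cases hiii : ∃ w, (y, w) ∈ F
      · obtain ⟨w, hw⟩ := hiii
        have hA : A y w := (hFbad _ hw).1
        have h0 : (k + 1 : ℕ) ∈ outColors A γ y :=
          ⟨w, hA, by rw [hγF _ _ hw, if_neg (by rw [hsy]; simp)]⟩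
        have := hOX (k + 1) (hout ▸ h0)
        omega
      by_cases hiv : ∃ w, (w, x) ∈ F
      · obtain ⟨w, hw⟩ := hiv
        have hA : A w x := (hFbad _ hw).1
        have hsw : s w = true := by
          cases hww : s w
          · exact absurd (hww.trans hsx.symm) (hbip w x hA)
          · rfl
        have h0 : (k + 1 : ℕ) ∈ inColors A γ x :=
          ⟨w, hA, by rw [hγF _ _ hw, if_neg (by rw [hsw]; simp)]⟩
        have := hIY (k + 1) (hin ▸ h0)
        omega
      -- untouched case
      push_neg at hi hii hiii hiv
      have hox : outColors A γ x = outColors A γ0 x := by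
        ext t
        constructor <;> rintro ⟨w, hA, rfl⟩
        · exact ⟨w, hA, (hγnF x w (hi w)).symm⟩
        · exact ⟨w, hA, hγnF x w (hi w)⟩
      have hix : inColors A γ x = inColors A γ0 x := by
        ext t
        constructor <;> rintro ⟨w, hA, rfl⟩
        · exact ⟨w, hA, (hγnF w x (hiv w)).symm⟩
        · exact ⟨w, hA, hγnF w x (hiv w)⟩
      have hoy : outColors A γ y = outColors A γ0 y := by
        ext t
        constructor <;> rintro ⟨w, hA, rfl⟩
        · exact ⟨w, hA, (hγnF y w (hiii w)).symm⟩
        · exact ⟨w, hA, hγnF y w (hiii w)⟩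
      have hiy : inColors A γ y = inColors A γ0 y := by
        ext t
        constructor <;> rintro ⟨w, hA, rfl⟩
        · exact ⟨w, hA, (hγnF w y (hii w)).symm⟩
        · exact ⟨w, hA, hγnF w y (hii w)⟩
      have heq0 : (outColors A γ0 x, inColors A γ0 x) = (outColors A γ0 y, inColors A γ0 y) := by
        rw [← hox, ← hix, ← hoy, ← hiy]
        exact heqpair
      have hnd : ¬Distinguished A γ0 p q := by
        rcases hxy with h | h
        · rw [show p = x from congrArg Prod.fst h, show q = y from congrArg Prod.snd h]
          exact not_not.mpr heq0
        · rw [show p = y from congrArg Prod.fst h, show q = x from congrArg Prod.snd h]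
          exact not_not.mpr heq0.symm
      have hpqBad : (p, q) ∈ Bad := (hmemBad (p, q)).mpr ⟨hApq, hnd⟩
      have hpqF : (p, q) ∉ F := by
        rcases hxy with h | h
        · rw [h]; exact hi y
        · rw [h]; exact hiii x
      -- extend F, contradicting maximality
      have hdisj : ∀ f ∈ F, x ≠ f.1 ∧ x ≠ f.2 ∧ y ≠ f.1 ∧ y ≠ f.2 := by
        intro f hf
        refine ⟨?_, ?_, ?_, ?_⟩
        · intro h
          exact hi f.2 (by rw [h]; exact hf)
        · intro h
          exact hiv f.1 (by rw [h]; exact hf)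
        · intro h
          exact hiii f.2 (by rw [h]; exact hf)
        · intro h
          exact hii f.1 (by rw [h]; exact hf)
      have hSDins : SD (insert (p, q) F) := by
        intro e he f hf hef
        rcases Finset.mem_insert.mp he with rfl | heF <;>
          rcases Finset.mem_insert.mp hf with h2 | hfF
        · exact absurd h2.symm hef
        · have hd := hdisj f hfF
          rcases hxy with h | h
          · have hp' : (p, q).1 = x := congrArg Prod.fst h
            have hq' : (p, q).2 = y := congrArg Prod.snd h
            rw [hp', hq']
            exact ⟨hd.1, hd.2.1, hd.2.2.1, hd.2.2.2⟩
          · have hp' : (p, q).1 = y := congrArg Prod.fst h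
            have hq' : (p, q).2 = x := congrArg Prod.snd h
            rw [hp', hq']
            exact ⟨hd.2.2.1, hd.2.2.2, hd.1, hd.2.1⟩
        · subst h2
          have hd := hdisj e heF
          rcases hxy with h | h
          · have hp' : (p, q).1 = x := congrArg Prod.fst h
            have hq' : (p, q).2 = y := congrArg Prod.snd h
            rw [hp', hq']
            exact ⟨(hd.1).symm, (hd.2.2.1).symm, (hd.2.1).symm, (hd.2.2.2).symm⟩
          · have hp' : (p, q).1 = y := congrArg Prod.fst h
            have hq' : (p, q).2 = x := congrArg Prod.snd h
            rw [hp', hq']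
            exact ⟨(hd.2.2.1).symm, (hd.1).symm, (hd.2.2.2).symm, (hd.2.1).symm⟩
        · exact hFSD e heF f hfF hef
      refine hFmax (insert (p, q) F) ?_ (Finset.ssubset_insert hpqF)
      exact Finset.mem_filter.mpr
        ⟨Finset.mem_powerset.mpr (Finset.insert_subset hpqBad hFsub), hSDins⟩
    cases hp : s p
    · exact key p q hp (hside p q hApq hp) (Or.inl rfl)
    · intro h
      exact key q p (hside' p q hApq hp) hp (Or.inr rfl) h.symm
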